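/- Let n ≥ 1 and let s : ℤ → ℝ be n-periodic (s_{i+n} = s_i for all i ∈ ℤ). Let m ≥ 1 and let integers i_1 ≤ j_1 ≤ i_2 ≤ j_2 ≤ … ≤ i_m ≤ j_m satisfy j_m ≤ i_1 + n. Then ∑_{i=0}^{n−1} |s_{i+1} − s_i| ≥ 2 ∑_{k=1}^{m} (s_{j_k} − s_{i_k}). -/

import Mathlib

private lemma int_Ico_succ_insert (i j : ℤ) (h : i ≤ j) :
    Finset.Ico i (j + 1) = insert j (Finset.Ico i j) := by
  ext x
  simp only [Finset.mem_Ico, Finset.mem_insert]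
  omega

private lemma sum_Ico_succ_top_int (f : ℤ → ℝ) {i j : ℤ} (h : i ≤ j) :
    ∑ t ∈ Finset.Ico i (j + 1), f t = (∑ t ∈ Finset.Ico i j, f t) + f j := by
  rw [int_Ico_succ_insert i j h, Finset.sum_insert (by simp), add_comm]

private lemma sum_Ico_consec_int (f : ℤ → ℝ) {i j k : ℤ} (hij : i ≤ j) (hjk : j ≤ k) :
    (∑ t ∈ Finset.Ico i j, f t) + ∑ t ∈ Finset.Ico j k, f t = ∑ t ∈ Finset.Ico i k, f t := by
  rw [← Finset.sum_union (Finset.Ico_disjoint_Ico_consecutive i j k),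
    Finset.Ico_union_Ico_eq_Ico hij hjk]

private lemma abs_le_var (s : ℤ → ℝ) {i j : ℤ} (hij : i ≤ j) :
    |s j - s i| ≤ ∑ t ∈ Finset.Ico i j, |s (t + 1) - s t| := by
  refine Int.le_induction (motive := fun j _ => |s j - s i| ≤ ∑ t ∈ Finset.Ico i j, |s (t + 1) - s t|) ?_ ?_ j hij
  · simp
  · intro j hj ih
    rw [sum_Ico_succ_top_int _ hj]
    calc |s (j + 1) - s i| = |(s (j + 1) - s j) + (s j - s i)| := by ring_nf
      _ ≤ |s (j + 1) - s j| + |s j - s i| := abs_add_le _ _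
      _ ≤ (∑ t ∈ Finset.Ico i j, |s (t + 1) - s t|) + |s (j + 1) - s j| := by
        linarith
  
private lemma sum_Ico_int_eq_range (g : ℤ → ℝ) (n : ℕ) :
    ∑ t ∈ Finset.Ico (0 : ℤ) (n : ℤ), g t = ∑ i ∈ Finset.range n, g (i : ℤ) := by
  induction n with
  | zero => simp
  | succ k ih =>
    have e : ((k + 1 : ℕ) : ℤ) = (k : ℤ) + 1 := by push_cast; ring
    rw [e, sum_Ico_succ_top_int g (by positivity), ih, Finset.sum_range_succ]

/-- **Inequality (3.8) of the paper.**  For an `n`-periodic real sequence `s`,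
the cyclic variation `∑_{i=0}^{n-1} |s (i+1) - s i|` is at least twice the total
increase of `s` over any collection of non-overlapping cyclic intervals
`[a k, b k]`, `k = 0, …, m-1`, with `a 0 ≤ b 0 ≤ a 1 ≤ … ≤ b (m-1) ≤ a 0 + n`. -/
theorem cyclic_variation_ge_twice_increase
    (n : ℕ) (hn : 1 ≤ n) (s : ℤ → ℝ) (hper : ∀ i : ℤ, s (i + (n : ℤ)) = s i)
    (m : ℕ) (hm : 1 ≤ m) (a b : ℕ → ℤ)
    (hab : ∀ k, k < m → a k ≤ b k)
    (hba : ∀ k, k + 1 < m → b k ≤ a (k + 1))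
    (hlast : b (m - 1) ≤ a 0 + (n : ℤ)) :
    2 * ∑ k ∈ Finset.range m, (s (b k) - s (a k)) ≤
      ∑ i ∈ Finset.range n, |s ((i : ℤ) + 1) - s (i : ℤ)| := by
  set f : ℤ → ℝ := fun t => |s (t + 1) - s t| with hf
  -- periodicity of f
  have hfper : ∀ t : ℤ, f (t + (n : ℤ)) = f t := by
    intro t
    have h1 : (t + (n : ℤ)) + 1 = (t + 1) + (n : ℤ) := by ring
    simp only [hf, h1, hper]
  -- the chain: a 0 ≤ b k for k < m
  have hchain : ∀ k, k < m → a 0 ≤ b k := by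
    intro k hk
    induction k with
    | zero => exact hab 0 hk
    | succ k ih =>
      have h1 : a 0 ≤ b k := ih (by omega)
      have h2 : b k ≤ a (k + 1) := hba k hk
      have h3 : a (k + 1) ≤ b (k + 1) := hab _ hk
      linarith
  -- main induction: partial-sum inequality
  have main : ∀ M, 1 ≤ M → M ≤ m →
      2 * ∑ k ∈ Finset.range M, (s (b k) - s (a k)) ≤
        (∑ t ∈ Finset.Ico (a 0) (b (M - 1)), f t) + (s (b (M - 1)) - s (a 0)) := by
    intro M hM1 hMm
    induction M, hM1 using Nat.le_induction with
    | base =>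
      simp only [Finset.range_one, Finset.sum_singleton]
      have := abs_le_var s (hab 0 (by omega))
      have h2 : s (b 0) - s (a 0) ≤ |s (b 0) - s (a 0)| := le_abs_self _
      simp only [Nat.sub_self]
      linarith
    | succ M hM1 ih =>
      have hMm' : M ≤ m := by omega
      have ihh := ih hMm'
      have hM1sub : M - 1 + 1 = M := by omega
      have hbM1aM : b (M - 1) ≤ a M := by
        have := hba (M - 1) (by omega)
        rwa [hM1sub] at this
      have haMbM : a M ≤ b M := hab M (by omega)
      have ha0bM1 : a 0 ≤ b (M - 1) := hchain (M - 1) (by omega)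
      have hsplit1 : (∑ t ∈ Finset.Ico (a 0) (b (M - 1)), f t)
          + ∑ t ∈ Finset.Ico (b (M - 1)) (a M), f t
          = ∑ t ∈ Finset.Ico (a 0) (a M), f t :=
        sum_Ico_consec_int f ha0bM1 hbM1aM
      have hsplit2 : (∑ t ∈ Finset.Ico (a 0) (a M), f t)
          + ∑ t ∈ Finset.Ico (a M) (b M), f t
          = ∑ t ∈ Finset.Ico (a 0) (b M), f t :=
        sum_Ico_consec_int f (le_trans ha0bM1 hbM1aM) haMbM
      have hvar1 : s (b (M - 1)) - s (a M) ≤ ∑ t ∈ Finset.Ico (b (M - 1)) (a M), f t := by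
        have := abs_le_var s hbM1aM
        have h2 : s (b (M - 1)) - s (a M) ≤ |s (a M) - s (b (M - 1))| := by
          rw [abs_sub_comm]; exact le_abs_self _
        linarith
      have hvar2 : s (b M) - s (a M) ≤ ∑ t ∈ Finset.Ico (a M) (b M), f t := by
        have := abs_le_var s haMbM
        have h2 : s (b M) - s (a M) ≤ |s (b M) - s (a M)| := le_abs_self _
        linarith
      rw [Finset.sum_range_succ]
      simp only [Nat.add_sub_cancel]
      linarith
  have hmain := main m hm le_rfl
  -- extend to the full period
  have ha0bm : a 0 ≤ b (m - 1) := hchain (m - 1) (by omega)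
  have hvarlast : s (b (m - 1)) - s (a 0) ≤ ∑ t ∈ Finset.Ico (b (m - 1)) (a 0 + n), f t := by
    have h1 := abs_le_var s hlast
    have h2 : s (a 0 + (n : ℤ)) = s (a 0) := hper (a 0)
    have h3 : s (b (m - 1)) - s (a 0) ≤ |s (a 0 + n) - s (b (m - 1))| := by
      rw [h2]; rw [abs_sub_comm]; exact le_abs_self _
    linarith
  have hsplit : (∑ t ∈ Finset.Ico (a 0) (b (m - 1)), f t)
      + ∑ t ∈ Finset.Ico (b (m - 1)) (a 0 + n), f t
      = ∑ t ∈ Finset.Ico (a 0) (a 0 + n), f t :=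
    sum_Ico_consec_int f ha0bm hlast
  -- translation invariance of the cyclic sum
  have hshift : ∀ c : ℤ, ∑ t ∈ Finset.Ico c (c + n), f t = ∑ t ∈ Finset.Ico (0 : ℤ) n, f t := by
    have hstep : ∀ c : ℤ, ∑ t ∈ Finset.Ico (c + 1) (c + 1 + n), f t
        = ∑ t ∈ Finset.Ico c (c + n), f t := by
      intro c
      have hcn : c ≤ c + n := by omega
      have hcn' : c + 1 ≤ c + n + 1 := by omega
      have e1 : ∑ t ∈ Finset.Ico c (c + n + 1), f t
          = (∑ t ∈ Finset.Ico c (c + n), f t) + f (c + n) := sum_Ico_succ_top_int f hcn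
      have e2 : (∑ t ∈ Finset.Ico c (c + 1), f t) + ∑ t ∈ Finset.Ico (c + 1) (c + n + 1), f t
          = ∑ t ∈ Finset.Ico c (c + n + 1), f t :=
        sum_Ico_consec_int f (by omega) (by omega)
      have e3 : ∑ t ∈ Finset.Ico c (c + 1), f t = f c := by
        rw [int_Ico_succ_insert c c le_rfl]; simp
      have e4 : f (c + n) = f c := hfper c
      have e5 : c + 1 + (n : ℤ) = c + n + 1 := by ring
      rw [e5]
      linarith [e1, e2]
    intro c
    induction c using Int.induction_on with
    | zero => norm_num
    | succ k ih => rw [hstep k]; exact ih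
    | pred k ih =>
      have h := hstep (-(k : ℤ) - 1)
      have e : -(k : ℤ) - 1 + 1 = -(k : ℤ) := by ring
      rw [e] at h
      rw [h] at ih
      exact ih
  have hzero : ∑ t ∈ Finset.Ico (0 : ℤ) n, f t = ∑ i ∈ Finset.range n, |s ((i : ℤ) + 1) - s (i : ℤ)| :=
    sum_Ico_int_eq_range f n
  have hfin : ∑ t ∈ Finset.Ico (a 0) (a 0 + n), f t
      = ∑ i ∈ Finset.range n, |s ((i : ℤ) + 1) - s (i : ℤ)| := by
    rw [hshift (a 0), hzero]
  linarith
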